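/- Let X be a second countable Hausdorff locally compact abelian group with Pontryagin dual Y, and let μ be a probability measure on X. Put E = {y ∈ Y : μ̂(y) = 1}. Then: (a) E is a closed subgroup of Y (closed under addition and negation, containing 0, and closed as a subset of Y); (b) μ̂(y + h) = μ̂(y) for all y ∈ Y and all h ∈ E; (c) μ assigns full measure to the annihilator A(X,E) = {x ∈ X : y(x) = 1 for all y ∈ E}, i.e. μ(A(X,E)) = 1. -/

import Mathlib

open MeasureTheory Complex

noncomputable section

/-- The Pontryagin dual of an additive topological abelian group `X`:
continuous characters `X → Circle`, written multiplicatively via `Multiplicative X`,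
carrying the compact-open topology. -/
abbrev DualGroup (X : Type*) [AddCommGroup X] [TopologicalSpace X] : Type _ :=
  PontryaginDual (Multiplicative X)

/-- The characteristic function (Fourier transform) of a measure `μ` on `X`. -/
def charFun' {X : Type*} [AddCommGroup X] [TopologicalSpace X] [MeasurableSpace X]
    (μ : Measure X) (y : DualGroup X) : ℂ :=
  ∫ x, (y (Multiplicative.ofAdd x) : ℂ) ∂μ

section Aux

set_option linter.unusedSectionVars false

variable {X : Type*} [AddCommGroup X] [TopologicalSpace X] [IsTopologicalAddGroup X]
    [LocallyCompactSpace X] [SecondCountableTopology X] [T2Space X]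
    [MeasurableSpace X] [BorelSpace X] (μ : Measure X) [IsProbabilityMeasure μ]

lemma aux_cont_eval (y : DualGroup X) :
    Continuous fun x : X => (y (Multiplicative.ofAdd x) : ℂ) :=
  continuous_subtype_val.comp ((map_continuous y).comp continuous_ofAdd)

lemma aux_integrable_eval (y : DualGroup X) :
    Integrable (fun x : X => (y (Multiplicative.ofAdd x) : ℂ)) μ := by
  refine (integrable_const (1 : ℝ)).mono' ((aux_cont_eval y).aestronglyMeasurable) ?_
  filter_upwards with x
  exact le_of_eq (Circle.norm_coe (y (Multiplicative.ofAdd x)))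

lemma aux_circle_eq_one {z : Circle} (h : (z : ℂ).re = 1) : (z : ℂ) = 1 := by
  have habs : ‖(z : ℂ)‖ = 1 := Circle.norm_coe z
  have h2 : (z:ℂ).re * (z:ℂ).re + (z:ℂ).im * (z:ℂ).im = 1 := by
    have := Complex.sq_norm (z : ℂ)
    rw [habs, Complex.normSq_apply] at this
    linarith [this]
  have him : (z:ℂ).im = 0 := by nlinarith
  exact Complex.ext (by simp [h]) (by simp [him])

lemma aux_charFun'_eq_one_iff (y : DualGroup X) :
    charFun' μ y = 1 ↔ ∀ᵐ x ∂μ, (y (Multiplicative.ofAdd x) : ℂ) = 1 := by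
  constructor
  · intro h
    have hint := aux_integrable_eval μ y
    have hre' : ∫ x, ((y (Multiplicative.ofAdd x) : ℂ)).re ∂μ = 1 := by
      have h2 := integral_re hint
      unfold charFun' at h
      rw [h] at h2
      simpa [RCLike.re_to_complex] using h2
    have hintre : Integrable (fun x => ((y (Multiplicative.ofAdd x) : ℂ)).re) μ := by
      have := hint.re
      simpa [RCLike.re_to_complex] using this
    have hre : ∫ x, (1 - (y (Multiplicative.ofAdd x) : ℂ).re) ∂μ = 0 := by
      rw [integral_sub (integrable_const 1) hintre, hre']
      simp
    have hnn : 0 ≤ᵐ[μ] fun x => 1 - (y (Multiplicative.ofAdd x) : ℂ).re := by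
      filter_upwards with x
      have : (y (Multiplicative.ofAdd x) : ℂ).re ≤ 1 := by
        calc (y (Multiplicative.ofAdd x) : ℂ).re ≤ ‖(y (Multiplicative.ofAdd x) : ℂ)‖ := Complex.re_le_norm _
        _ = 1 := Circle.norm_coe _
      simp [this]
    have hi : Integrable (fun x => 1 - (y (Multiplicative.ofAdd x) : ℂ).re) μ :=
      (integrable_const 1).sub hintre
    have := (integral_eq_zero_iff_of_nonneg_ae hnn hi).1 hre
    filter_upwards [this] with x hx
    have hx1 : (y (Multiplicative.ofAdd x) : ℂ).re = 1 := by
      have : (1 : ℝ) - (y (Multiplicative.ofAdd x) : ℂ).re = 0 := hx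
      linarith
    exact aux_circle_eq_one hx1
  · intro h
    unfold charFun'
    rw [integral_congr_ae (h.mono fun x hx => hx)]
    simp

lemma aux_dual_secondCountable : SecondCountableTopology (DualGroup X) := by
  haveI : SecondCountableTopology (Multiplicative X) := ‹SecondCountableTopology X›
  haveI : LocallyCompactSpace (Multiplicative X) := ‹LocallyCompactSpace X›
  exact (ContinuousMonoidHom.isEmbedding_toContinuousMap _ _).secondCountableTopology

lemma aux_dual_eval_cont (x : Multiplicative X) :
    Continuous fun y : DualGroup X => (y x : ℂ) := by
  haveI : ContinuousEvalConst (PontryaginDual (Multiplicative X)) (Multiplicative X) Circle :=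
    ContinuousMonoidHom.instContinuousEvalConst _ _
  exact continuous_subtype_val.comp (continuous_eval_const x)

lemma aux_charFun'_continuous : Continuous (charFun' μ) := by
  haveI := aux_dual_secondCountable (X := X)
  refine continuous_of_dominated (μ := μ) (F := fun y (x : X) => (y (Multiplicative.ofAdd x) : ℂ))
    (bound := fun _ => (1 : ℝ)) (fun y => (aux_cont_eval y).aestronglyMeasurable)
    (fun y => ?_) (integrable_const 1) ?_
  · filter_upwards with x
    exact le_of_eq (Circle.norm_coe (y (Multiplicative.ofAdd x)))
  · filter_upwards with x
    exact aux_dual_eval_cont (Multiplicative.ofAdd x)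

end Aux

theorem charFun_eq_one_set_is_closed_subgroup_and_invariance
    {X : Type*} [AddCommGroup X] [TopologicalSpace X] [IsTopologicalAddGroup X]
    [LocallyCompactSpace X] [SecondCountableTopology X] [T2Space X]
    [MeasurableSpace X] [BorelSpace X]
    (μ : Measure X) [IsProbabilityMeasure μ] :
    -- (a) `E = {y : μ̂(y) = 1}` is a closed subgroup of the dual group `Y`
    (1 : DualGroup X) ∈ {y : DualGroup X | charFun' μ y = 1} ∧
    (∀ u v : DualGroup X, charFun' μ u = 1 → charFun' μ v = 1 → charFun' μ (u * v) = 1) ∧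
    (∀ u : DualGroup X, charFun' μ u = 1 → charFun' μ u⁻¹ = 1) ∧
    IsClosed {y : DualGroup X | charFun' μ y = 1} ∧
    -- (b) `μ̂` is `E`-invariant
    (∀ y h : DualGroup X, charFun' μ h = 1 → charFun' μ (y * h) = charFun' μ y) ∧
    -- (c) `μ` is concentrated on the annihilator `A(X, E)`
    μ {x : X | ∀ y : DualGroup X, charFun' μ y = 1 → y (Multiplicative.ofAdd x) = 1} = 1 := by
  refine ⟨?_, ?_, ?_, ?_, ?_, ?_⟩
  · -- 1 ∈ E
    show charFun' μ 1 = 1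
    rw [aux_charFun'_eq_one_iff]
    filter_upwards with x
    show (((1 : DualGroup X) (Multiplicative.ofAdd x) : Circle) : ℂ) = 1
    norm_cast
  · -- closed under multiplication
    intro u v hu hv
    rw [aux_charFun'_eq_one_iff] at hu hv ⊢
    filter_upwards [hu, hv] with x hxu hxv
    have : (((u * v) (Multiplicative.ofAdd x) : Circle) : ℂ)
        = ((u (Multiplicative.ofAdd x) : Circle) : ℂ) * ((v (Multiplicative.ofAdd x) : Circle) : ℂ) := rfl
    rw [this, hxu, hxv, one_mul]
  · -- closed under inversion
    intro u hu
    rw [aux_charFun'_eq_one_iff] at hu ⊢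
    filter_upwards [hu] with x hx
    have : ((u⁻¹ (Multiplicative.ofAdd x) : Circle) : ℂ)
        = ((u (Multiplicative.ofAdd x) : Circle) : ℂ)⁻¹ := rfl
    rw [this, hx, inv_one]
  · -- closed
    exact isClosed_eq (aux_charFun'_continuous μ) continuous_const
  · -- invariance
    intro y h hh
    rw [aux_charFun'_eq_one_iff] at hh
    unfold charFun'
    refine integral_congr_ae ?_
    filter_upwards [hh] with x hx
    have : (((y * h) (Multiplicative.ofAdd x) : Circle) : ℂ)
        = ((y (Multiplicative.ofAdd x) : Circle) : ℂ) * ((h (Multiplicative.ofAdd x) : Circle) : ℂ) := rfl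
    rw [this, hx, mul_one]
  · -- μ concentrated on the annihilator
    haveI := aux_dual_secondCountable (X := X)
    set S : Set (DualGroup X) := {y | charFun' μ y = 1} with hS
    obtain ⟨D0, hD0count, hD0dense⟩ := TopologicalSpace.exists_countable_dense S
    set D : Set (DualGroup X) := Subtype.val '' D0 with hD
    have hDcount : D.Countable := hD0count.image _
    have hDS : D ⊆ S := by rintro _ ⟨⟨d, hd⟩, _, rfl⟩; exact hd
    set A : Set X :=
      {x : X | ∀ y : DualGroup X, charFun' μ y = 1 → y (Multiplicative.ofAdd x) = 1} with hA
    set A' : Set X := {x : X | ∀ y ∈ D, y (Multiplicative.ofAdd x) = 1} with hA'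
    have hAA' : A = A' := by
      apply Set.Subset.antisymm
      · intro x hx y hy
        exact hx y (hDS hy)
      · intro x hx y hy
        -- the set of characters equal to 1 at x is closed and contains D
        have hclosed : IsClosed {z : DualGroup X | z (Multiplicative.ofAdd x) = 1} := by
          have : {z : DualGroup X | z (Multiplicative.ofAdd x) = 1} =
              (fun z : DualGroup X => (z (Multiplicative.ofAdd x) : ℂ)) ⁻¹' {1} := by
            ext z
            simp [Circle.coe_eq_one]
          rw [this]
          exact isClosed_singleton.preimage (aux_dual_eval_cont (Multiplicative.ofAdd x))
        have hyD : y ∈ closure D := by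
          have h1 : (⟨y, hy⟩ : S) ∈ closure D0 := hD0dense _
          have h2 : (⟨y, hy⟩ : S).val ∈ Subtype.val '' closure D0 := ⟨_, h1, rfl⟩
          exact (image_closure_subset_closure_image continuous_subtype_val) h2
        have := hclosed.closure_subset_iff.2 (fun z hz => hx z hz) hyD
        exact this
    have hmeas : μ A' = 1 := by
      have hae : ∀ᵐ x ∂μ, x ∈ A' := by
        simp only [hA', Set.mem_setOf_eq]
        rw [ae_ball_iff hDcount]
        intro y hy
        have h1 := (aux_charFun'_eq_one_iff μ y).1 (hDS hy)
        filter_upwards [h1] with x hx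
        exact Circle.coe_eq_one.1 hx
      have hcompl : μ A'ᶜ = 0 := ae_iff.1 hae
      calc μ A' = μ Set.univ := measure_congr (ae_eq_univ.2 hcompl)
      _ = 1 := measure_univ
    show μ A = 1
    rw [hAA']
    exact hmeas

end
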